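/- Let p be an odd prime. There exist no subsets S, T ⊆ ℤ/p²ℤ with 0 ∈ S, 0 ∈ T, such that S is not contained in any proper subgroup of ℤ/p²ℤ, T is not contained in any proper subgroup, and S and T are formally dual with respect to the pairing ⟨x,y⟩ = e^{2πi xy/p²} (i.e., for all y, |(1/|S|) ∑_{v ∈ S} e^{2πi vy/p²}|² = (1/|T|)·#{(w,w') ∈ T² : y = w - w'}). -/

import Mathlib

open Polynomial Finset

lemma zmod_sum_val {M : Type*} [AddCommMonoid M] (n : ℕ) [NeZero n] (g : ℕ → M) :
    ∑ y : ZMod n, g y.val = ∑ k ∈ Finset.range n, g k := by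
  refine Finset.sum_nbij' (fun y => y.val) (fun k => (k : ZMod n)) ?_ ?_ ?_ ?_ ?_
  · intro a _; exact Finset.mem_range.2 (ZMod.val_lt a)
  · intro a _; exact Finset.mem_univ _
  · intro a _; exact ZMod.natCast_zmod_val a
  · intro a ha; exact ZMod.val_cast_of_lt (Finset.mem_range.1 ha)
  · intro a _; rfl

lemma geom_sum_root (w : ℂ) (n : ℕ) (hn : 0 < n) (h : w ^ n = 1) :
    ∑ k ∈ Finset.range n, w ^ k = if w = 1 then (n : ℂ) else 0 := by
  split_ifs with hw
  · simp [hw]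
  · rw [geom_sum_eq hw, h]; simp

open Complex in
lemma conj_pow_root {ζ : ℂ} {n : ℕ} (hn : 0 < n) (hζ : IsPrimitiveRoot ζ n) (m : ℕ) :
    (starRingEnd ℂ) (ζ ^ m) = (ζ ^ m)⁻¹ := by
  have habs : ‖ζ‖ = 1 := Complex.norm_eq_one_of_pow_eq_one hζ.pow_eq_one hn.ne'
  rw [← Complex.inv_eq_conj]
  rw [norm_pow, habs, one_pow]

lemma parseval {n : ℕ} [NeZero n] {ζ : ℂ} (hζ : IsPrimitiveRoot ζ n)
    (S : Finset (ZMod n)) :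
    ∑ y : ZMod n, (∑ v ∈ S, ζ ^ (v.val * y.val)) *
      (starRingEnd ℂ) (∑ v ∈ S, ζ ^ (v.val * y.val)) = (n : ℂ) * S.card := by
  have hn : 0 < n := Nat.pos_of_ne_zero (NeZero.ne n)
  have key : ∀ y : ZMod n, (∑ v ∈ S, ζ ^ (v.val * y.val)) *
      (starRingEnd ℂ) (∑ v ∈ S, ζ ^ (v.val * y.val)) =
      ∑ v ∈ S, ∑ w ∈ S, (ζ ^ v.val * (ζ ^ w.val)⁻¹) ^ y.val := by
    intro y
    rw [map_sum, Finset.sum_mul_sum]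
    refine Finset.sum_congr rfl fun v _ => Finset.sum_congr rfl fun w _ => ?_
    rw [conj_pow_root hn hζ, mul_pow, inv_pow, ← pow_mul, ← pow_mul]
  rw [Finset.sum_congr rfl fun y _ => key y]
  rw [Finset.sum_comm]
  have inner : ∀ v ∈ S, ∀ w ∈ S, ∑ y : ZMod n, (ζ ^ v.val * (ζ ^ w.val)⁻¹) ^ y.val
      = if v = w then (n : ℂ) else 0 := by
    intro v _ w _
    rw [zmod_sum_val n fun k => (ζ ^ v.val * (ζ ^ w.val)⁻¹) ^ k]
    rw [geom_sum_root _ n hn (by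
      rw [mul_pow, inv_pow, ← pow_mul, ← pow_mul, mul_comm v.val n, mul_comm w.val n,
        pow_mul, pow_mul, hζ.pow_eq_one, one_pow, one_pow, inv_one, mul_one])]
    congr 1
    rw [eq_iff_iff]
    constructor
    · intro h
      have hne : ζ ^ w.val ≠ 0 := pow_ne_zero _ (hζ.ne_zero hn.ne')
      have : ζ ^ v.val = ζ ^ w.val := by
        field_simp at h
        exact h
      exact ZMod.val_injective n (hζ.pow_inj v.val_lt w.val_lt this)
    · rintro rfl
      exact mul_inv_cancel₀ (pow_ne_zero _ (hζ.ne_zero hn.ne'))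
  calc ∑ v ∈ S, ∑ y : ZMod n, ∑ w ∈ S, (ζ ^ v.val * (ζ ^ w.val)⁻¹) ^ y.val
      = ∑ v ∈ S, ∑ w ∈ S, ∑ y : ZMod n, (ζ ^ v.val * (ζ ^ w.val)⁻¹) ^ y.val := by
        refine Finset.sum_congr rfl fun v _ => Finset.sum_comm
    _ = ∑ v ∈ S, ∑ w ∈ S, if v = w then (n : ℂ) else 0 := by
        refine Finset.sum_congr rfl fun v hv => Finset.sum_congr rfl fun w hw => inner v hv w hw
    _ = ∑ v ∈ S, if v ∈ S then (n : ℂ) else 0 :=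
        Finset.sum_congr rfl fun v _ => Finset.sum_ite_eq S v _
    _ = (n : ℂ) * S.card := by
        rw [Finset.sum_congr rfl fun v hv => if_pos hv]
        simp [mul_comm]

lemma final_step {p : ℕ} (hp : p.Prime) {α : Type*} (S : Finset α) (g : α → ℕ)
    (hdvd : ((X : (ZMod p)[X]) - 1) ^ p ∣ ∑ v ∈ S, X ^ (g v)) :
    p ∣ (S.filter fun v => g v % p = 0).card := by
  haveI : Fact p.Prime := ⟨hp⟩
  have hXp : ((X : (ZMod p)[X]) - 1) ^ p = X ^ p - 1 := by
    rw [sub_pow_char, one_pow]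
  rw [hXp] at hdvd
  set P2 : (ZMod p)[X] := ∑ v ∈ S, X ^ (g v % p) with hP2def
  have h1 : ((X : (ZMod p)[X]) ^ p - 1) ∣ (∑ v ∈ S, X ^ (g v)) - P2 := by
    rw [hP2def, ← Finset.sum_sub_distrib]
    apply Finset.dvd_sum
    intro v _
    have hsplit : (X : (ZMod p)[X]) ^ (g v) = X ^ (g v % p) * ((X ^ p) ^ (g v / p)) := by
      rw [← pow_mul, ← pow_add, Nat.mod_add_div]
    rw [hsplit]
    have : (X : (ZMod p)[X]) ^ (g v % p) * ((X ^ p) ^ (g v / p)) - X ^ (g v % p)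
        = X ^ (g v % p) * (((X ^ p) ^ (g v / p)) - 1) := by ring
    rw [this]
    exact Dvd.dvd.mul_left (by simpa using sub_dvd_pow_sub_pow ((X : (ZMod p)[X]) ^ p) 1 (g v / p)) _
  have hdvd2 : ((X : (ZMod p)[X]) ^ p - 1) ∣ P2 := by
    have := dvd_sub hdvd h1
    simpa [sub_sub_cancel] using this
  have hP2zero : P2 = 0 := by
    by_contra hne
    have hdeg1 : ((X : (ZMod p)[X]) ^ p - 1).natDegree ≤ P2.natDegree :=
      Polynomial.natDegree_le_of_dvd hdvd2 hne
    have hdeg2 : ((X : (ZMod p)[X]) ^ p - 1).natDegree = p := by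
      rw [show (1 : (ZMod p)[X]) = C 1 from (Polynomial.C_1).symm,
        Polynomial.natDegree_X_pow_sub_C]
    have hdeg3 : P2.natDegree ≤ p - 1 := by
      apply Polynomial.natDegree_sum_le_of_forall_le
      intro v _
      simpa [Polynomial.natDegree_X_pow] using Nat.le_sub_one_of_lt (Nat.mod_lt _ hp.pos)
    rw [hdeg2] at hdeg1
    have hppos := hp.pos
    omega
  have hcoeff : ((S.filter fun v => g v % p = 0).card : ZMod p) = 0 := by
    have : P2.coeff 0 = ∑ v ∈ S, if g v % p = 0 then (1 : ZMod p) else 0 := by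
      rw [hP2def, Polynomial.finset_sum_coeff]
      refine Finset.sum_congr rfl fun v _ => ?_
      rw [Polynomial.coeff_X_pow]
      simp [eq_comm]
    rw [hP2zero] at this
    simp only [Polynomial.coeff_zero] at this
    rw [Finset.sum_boole] at this
    exact_mod_cast this.symm
  exact (ZMod.natCast_eq_zero_iff _ _).mp hcoeff

lemma cyclotomic_sq_mod_p {p : ℕ} (hp : p.Prime) :
    cyclotomic (p ^ 2) (ZMod p) = ((X : (ZMod p)[X]) - 1) ^ (p * (p - 1)) := by
  haveI : Fact p.Prime := ⟨hp⟩
  have h := Polynomial.cyclotomic_prime_pow_eq_geom_sum (R := ZMod p) (p := p) (n := 1) hp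
  rw [pow_one] at h
  rw [show p ^ 2 = p ^ (1 + 1) by ring, h]
  have hgeom : ∑ i ∈ Finset.range p, ((X : (ZMod p)[X]) ^ p) ^ i
      = (∑ i ∈ Finset.range p, (X : (ZMod p)[X]) ^ i) ^ p := by
    calc ∑ i ∈ Finset.range p, ((X : (ZMod p)[X]) ^ p) ^ i
        = ∑ i ∈ Finset.range p, frobenius (ZMod p)[X] p ((X : (ZMod p)[X]) ^ i) := by
          refine Finset.sum_congr rfl fun i _ => ?_
          rw [frobenius_def, ← pow_mul, ← pow_mul, mul_comm]
      _ = frobenius (ZMod p)[X] p (∑ i ∈ Finset.range p, (X : (ZMod p)[X]) ^ i) :=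
          (map_sum (frobenius (ZMod p)[X] p) _ _).symm
      _ = (∑ i ∈ Finset.range p, (X : (ZMod p)[X]) ^ i) ^ p := by rw [frobenius_def]
  have hsum : (∑ i ∈ Finset.range p, (X : (ZMod p)[X]) ^ i) = (X - 1) ^ (p - 1) := by
    have hXne : (X : (ZMod p)[X]) - 1 ≠ 0 := by
      simpa using Polynomial.X_sub_C_ne_zero (1 : ZMod p)
    apply mul_left_cancel₀ hXne
    rw [← pow_succ', Nat.sub_add_cancel hp.pos]
    have := geom_sum_mul (X : (ZMod p)[X]) p
    have hchar : ((X : (ZMod p)[X]) - 1) ^ p = X ^ p - 1 := by rw [sub_pow_char, one_pow]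
    rw [hchar, ← this]
    ring
  rw [hgeom, hsum, ← pow_mul, mul_comm (p-1) p]

theorem stmt_13 (p : ℕ) (hp : p.Prime) (hodd : Odd p) :
    ¬ ∃ (S T : Finset (ZMod (p ^ 2))),
        (0 : ZMod (p ^ 2)) ∈ S ∧ (0 : ZMod (p ^ 2)) ∈ T ∧
        (∀ H : AddSubgroup (ZMod (p ^ 2)), (↑S : Set (ZMod (p ^ 2))) ⊆ H → H = ⊤) ∧
        (∀ H : AddSubgroup (ZMod (p ^ 2)), (↑T : Set (ZMod (p ^ 2))) ⊆ H → H = ⊤) ∧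
        (∀ y : ZMod (p ^ 2),
          ‖(S.card : ℂ)⁻¹ * ∑ v ∈ S,
              Complex.exp (2 * Real.pi * Complex.I * (v.val * y.val) / (p ^ 2 : ℕ))‖ ^ 2 =
            (T.card : ℝ)⁻¹ *
              ((T ×ˢ T).filter fun w => y = w.1 - w.2).card) := by
  rintro ⟨S, T, hS0, hT0, hSprim, hTprim, hdual⟩
  have hpne2 : p ≠ 2 := by rintro rfl; revert hodd; decide
  have hp3 : 3 ≤ p := by have := hp.two_le; omega
  have hn1 : 1 < p ^ 2 := by nlinarith
  haveI : Fact (1 < p ^ 2) := ⟨hn1⟩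
  haveI : NeZero (p ^ 2) := ⟨by positivity⟩
  have hnne : (p ^ 2 : ℕ) ≠ 0 := by positivity
  have hnpos : 0 < p ^ 2 := Nat.pos_of_ne_zero hnne
  set ζ : ℂ := Complex.exp (2 * Real.pi * Complex.I / (p ^ 2 : ℕ)) with hζdef
  have hζ : IsPrimitiveRoot ζ (p ^ 2) := Complex.isPrimitiveRoot_exp _ hnne
  have hterm : ∀ a b : ℕ,
      Complex.exp (2 * Real.pi * Complex.I * ((a : ℂ) * (b : ℂ)) / ((p ^ 2 : ℕ) : ℂ))
        = ζ ^ (a * b) := by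
    intro a b
    rw [hζdef, ← Complex.exp_nat_mul]
    congr 1
    push_cast
    ring
  have hs0 : 0 < S.card := Finset.card_pos.mpr ⟨0, hS0⟩
  have ht0 : 0 < T.card := Finset.card_pos.mpr ⟨0, hT0⟩
  have hsR : ((S.card : ℝ)) ≠ 0 := Nat.cast_ne_zero.mpr hs0.ne'
  have htR : ((T.card : ℝ)) ≠ 0 := Nat.cast_ne_zero.mpr ht0.ne'
  have hE : ∀ y : ZMod (p ^ 2), ‖∑ v ∈ S, ζ ^ (v.val * y.val)‖ ^ 2
      = (S.card : ℝ) ^ 2 * ((T.card : ℝ)⁻¹ *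
          (((T ×ˢ T).filter fun w => y = w.1 - w.2).card : ℝ)) := by
    intro y
    have h := hdual y
    simp only [hterm] at h
    rw [norm_mul, norm_inv, Complex.norm_natCast, mul_pow] at h
    rw [← h]
    field_simp
  have habs2 : ∀ z : ℂ, ((‖z‖ : ℂ)) ^ 2 = z * (starRingEnd ℂ) z := by
    intro z
    rw [Complex.mul_conj]
    norm_cast
    exact Complex.sq_norm z
  have hpar : ∑ y : ZMod (p ^ 2), ‖∑ v ∈ S, ζ ^ (v.val * y.val)‖ ^ 2
      = (p ^ 2 : ℝ) * S.card := by
    apply Complex.ofReal_injective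
    push_cast
    rw [Finset.sum_congr rfl fun (y : ZMod (p ^ 2)) _ => habs2 (∑ v ∈ S, ζ ^ (v.val * y.val))]
    have hps := parseval hζ S
    push_cast at hps
    exact hps
  have hnuN : ∑ y : ZMod (p ^ 2), ((T ×ˢ T).filter fun w => y = w.1 - w.2).card
      = T.card * T.card := by
    have h := Finset.card_eq_sum_card_fiberwise
      (f := fun w : ZMod (p ^ 2) × ZMod (p ^ 2) => w.1 - w.2) (s := T ×ˢ T) (t := Finset.univ)
      (fun x _ => Finset.mem_univ _)
    rw [Finset.card_product] at h
    calc ∑ y : ZMod (p ^ 2), ((T ×ˢ T).filter fun w => y = w.1 - w.2).card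
        = ∑ y : ZMod (p ^ 2),
            ((T ×ˢ T).filter fun w : ZMod (p^2) × ZMod (p^2) =>
              (fun w : ZMod (p^2) × ZMod (p^2) => w.1 - w.2) w = y).card := by
          refine Finset.sum_congr rfl fun y _ => ?_
          congr 1
          refine Finset.filter_congr fun w _ => ?_
          simp [eq_comm]
      _ = T.card * T.card := h.symm
  have hst : S.card * T.card = p ^ 2 := by
    have h1 := hpar
    rw [Finset.sum_congr rfl fun y _ => hE y] at h1
    rw [← Finset.mul_sum, ← Finset.mul_sum] at h1
    have h2 : ∑ y : ZMod (p^2), (((T ×ˢ T).filter fun w => y = w.1 - w.2).card : ℝ)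
        = (T.card : ℝ) * T.card := by
      rw [← Nat.cast_sum]
      rw [hnuN]
      push_cast
      ring
    rw [h2] at h1
    have h3 : (T.card : ℝ)⁻¹ * ((T.card : ℝ) * T.card) = (T.card : ℝ) := by
      field_simp
    rw [h3] at h1
    have h4 : (S.card : ℝ) * T.card = (p : ℝ)^2 := by
      apply mul_left_cancel₀ hsR
      push_cast at h1 ⊢
      linear_combination h1
    exact_mod_cast h4
  have hcard_ne_one : ∀ (U : Finset (ZMod (p^2))), (0 : ZMod (p^2)) ∈ U →
      (∀ H : AddSubgroup (ZMod (p^2)), (↑U : Set (ZMod (p^2))) ⊆ H → H = ⊤) →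
      U.card ≠ 1 := by
    intro U h0 hprim h1
    obtain ⟨a, ha⟩ := Finset.card_eq_one.mp h1
    have ha0 : a = 0 := by
      rw [ha, Finset.mem_singleton] at h0; exact h0.symm
    have hsub : (↑U : Set (ZMod (p^2))) ⊆ (⊥ : AddSubgroup (ZMod (p^2))) := by
      rw [ha, ha0]
      intro x hx
      simp only [Finset.coe_singleton, Set.mem_singleton_iff] at hx
      simp [hx]
    have htop := hprim ⊥ hsub
    have hmem : (1 : ZMod (p^2)) ∈ (⊥ : AddSubgroup (ZMod (p^2))) := by
      rw [htop]; exact AddSubgroup.mem_top 1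
    rw [AddSubgroup.mem_bot] at hmem
    exact one_ne_zero hmem
  have hS_p : S.card = p := by
    have hdvd : S.card ∣ p ^ 2 := ⟨T.card, hst.symm⟩
    rcases (Nat.dvd_prime_pow hp).mp hdvd with ⟨k, hk, hSk⟩
    interval_cases k
    · exact absurd (by simpa using hSk) (hcard_ne_one S hS0 hSprim)
    · simpa using hSk
    · exfalso
      have hT1 : T.card = 1 := by
        rw [hSk] at hst
        have : p ^ 2 * T.card = p ^ 2 * 1 := by rw [hst]; ring
        exact Nat.eq_of_mul_eq_mul_left hnpos this
      exact hcard_ne_one T hT0 hTprim hT1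
  have hT_p : T.card = p := by
    rw [hS_p] at hst
    have : p * T.card = p * p := by rw [hst]; ring
    exact Nat.eq_of_mul_eq_mul_left hp.pos this
  have hpR : (p : ℝ) ≠ 0 := Nat.cast_ne_zero.mpr hp.pos.ne'
  set ν : ℕ := ((T ×ˢ T).filter fun w => (1 : ZMod (p^2)) = w.1 - w.2).card with hνdef
  have hf1 : ‖∑ v ∈ S, ζ ^ v.val‖ ^ 2 = (p : ℝ) * ν := by
    have h := hE 1
    rw [ZMod.val_one] at h
    simp only [mul_one] at h
    rw [hS_p, hT_p, ← hνdef] at h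
    rw [h]
    field_simp
  set P : ℤ[X] := ∑ v ∈ S, X ^ v.val with hPdef
  set Q : ℤ[X] := ∑ v ∈ S, X ^ ((-v).val) with hQdef
  have haevalP : Polynomial.aeval ζ P = ∑ v ∈ S, ζ ^ v.val := by
    rw [hPdef, map_sum]
    refine Finset.sum_congr rfl fun v _ => ?_
    rw [map_pow, Polynomial.aeval_X]
  have hinv : ∀ v : ZMod (p^2), ζ ^ ((-v).val) = (ζ ^ v.val)⁻¹ := by
    intro v
    have hmod : ((-v).val + v.val) % (p^2) = 0 := by
      rw [← ZMod.val_add]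
      simp
    obtain ⟨k, hk⟩ := Nat.dvd_of_mod_eq_zero hmod
    refine eq_inv_of_mul_eq_one_left ?_
    rw [← pow_add, hk, pow_mul, hζ.pow_eq_one, one_pow]
  have haevalQ : Polynomial.aeval ζ Q = (starRingEnd ℂ) (∑ v ∈ S, ζ ^ v.val) := by
    rw [hQdef, map_sum, map_sum]
    refine Finset.sum_congr rfl fun v _ => ?_
    rw [map_pow, Polynomial.aeval_X, hinv v, conj_pow_root hnpos hζ]
  have hroot : Polynomial.aeval ζ (P * Q - Polynomial.C ((p : ℤ) * ν)) = 0 := by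
    rw [map_sub, map_mul, haevalP, haevalQ, Polynomial.aeval_C]
    rw [Complex.mul_conj, sub_eq_zero]
    have hnsq : Complex.normSq (∑ v ∈ S, ζ ^ v.val) = (p : ℝ) * ν := by
      rw [← Complex.sq_norm, hf1]
    rw [hnsq]
    simp only [algebraMap_int_eq, eq_intCast]
    push_cast
    ring
  have hcyc : cyclotomic (p^2) ℤ ∣ P * Q - Polynomial.C ((p : ℤ) * ν) := by
    rw [Polynomial.cyclotomic_eq_minpoly hζ hnpos]
    exact minpoly.isIntegrallyClosed_dvd (hζ.isIntegral hnpos) hroot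
  haveI : Fact p.Prime := ⟨hp⟩
  have hmapdvd : ((X : (ZMod p)[X]) - 1) ^ (p * (p-1)) ∣
      (P.map (Int.castRingHom (ZMod p))) * (Q.map (Int.castRingHom (ZMod p))) := by
    have h1 := Polynomial.map_dvd (Int.castRingHom (ZMod p)) hcyc
    rw [Polynomial.map_cyclotomic_int, cyclotomic_sq_mod_p hp] at h1
    rw [Polynomial.map_sub, Polynomial.map_mul, Polynomial.map_C] at h1
    have hC0 : Polynomial.C ((Int.castRingHom (ZMod p)) ((p : ℤ) * ν)) = 0 := by
      have : ((Int.castRingHom (ZMod p)) ((p : ℤ) * ν)) = 0 := by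
        simp [ZMod.natCast_self]
      rw [this, Polynomial.C_0]
    rw [hC0, sub_zero] at h1
    exact h1
  have hPmap : P.map (Int.castRingHom (ZMod p)) = ∑ v ∈ S, (X : (ZMod p)[X]) ^ v.val := by
    rw [hPdef, Polynomial.map_sum]
    refine Finset.sum_congr rfl fun v _ => ?_
    rw [Polynomial.map_pow, Polynomial.map_X]
  have hQmap : Q.map (Int.castRingHom (ZMod p))
      = ∑ v ∈ S, (X : (ZMod p)[X]) ^ ((-v).val) := by
    rw [hQdef, Polynomial.map_sum]
    refine Finset.sum_congr rfl fun v _ => ?_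
    rw [Polynomial.map_pow, Polynomial.map_X]
  have hcoeff0 : ∀ (g : ZMod (p^2) → ℕ), (∀ v, g v = 0 ↔ v = 0) →
      (∑ v ∈ S, (X : (ZMod p)[X]) ^ (g v)).coeff 0 = 1 := by
    intro g hg
    rw [Polynomial.finset_sum_coeff]
    have hterm2 : ∀ v ∈ S, ((X : (ZMod p)[X]) ^ (g v)).coeff 0
        = if v = 0 then 1 else 0 := by
      intro v _
      rw [Polynomial.coeff_X_pow]
      by_cases hv : v = 0
      · simp [hv, (hg 0).mpr rfl]
      · have hne : g v ≠ 0 := fun h => hv ((hg v).mp h)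
        simp [hv, Ne.symm hne]
    rw [Finset.sum_congr rfl hterm2, Finset.sum_ite_eq' S 0 fun _ => (1 : ZMod p)]
    simp [hS0]
  have hPne : (∑ v ∈ S, (X : (ZMod p)[X]) ^ v.val) ≠ 0 := by
    intro h0
    have hco := hcoeff0 (fun v => v.val) (fun v => ZMod.val_eq_zero v)
    rw [h0] at hco
    simp at hco
  have hQne : (∑ v ∈ S, (X : (ZMod p)[X]) ^ ((-v).val)) ≠ 0 := by
    intro h0
    have hco := hcoeff0 (fun v => (-v).val)
      (fun v => by rw [ZMod.val_eq_zero]; exact neg_eq_zero)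
    rw [h0] at hco
    simp at hco
  have hmulne := mul_ne_zero hPne hQne
  rw [hPmap, hQmap] at hmapdvd
  have hle : p * (p - 1) ≤
      Polynomial.rootMultiplicity 1 (∑ v ∈ S, (X : (ZMod p)[X]) ^ v.val)
      + Polynomial.rootMultiplicity 1 (∑ v ∈ S, (X : (ZMod p)[X]) ^ ((-v).val)) := by
    rw [← Polynomial.rootMultiplicity_mul hmulne]
    rw [Polynomial.le_rootMultiplicity_iff hmulne]
    simpa using hmapdvd
  have hor : p ≤ Polynomial.rootMultiplicity 1 (∑ v ∈ S, (X : (ZMod p)[X]) ^ v.val)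
      ∨ p ≤ Polynomial.rootMultiplicity 1 (∑ v ∈ S, (X : (ZMod p)[X]) ^ ((-v).val)) := by
    by_contra hcon
    push_neg at hcon
    obtain ⟨h1, h2⟩ := hcon
    have h4 : 2 * p ≤ p * (p - 1) := by
      have h5 : 2 ≤ p - 1 := by omega
      calc 2 * p = p * 2 := by ring
        _ ≤ p * (p - 1) := Nat.mul_le_mul_left p h5
    have h6 := le_trans h4 hle
    omega
  have hdivcard : p ∣ (S.filter fun v => v.val % p = 0).card := by
    have key : ∀ (g2 : ZMod (p^2) → ℕ),
        p ≤ Polynomial.rootMultiplicity 1 (∑ v ∈ S, (X : (ZMod p)[X]) ^ (g2 v)) →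
        p ∣ (S.filter fun v => g2 v % p = 0).card := by
      intro g2 hmul
      apply final_step hp S g2
      calc ((X : (ZMod p)[X]) - 1) ^ p
          ∣ (X - Polynomial.C 1) ^ (Polynomial.rootMultiplicity 1
              (∑ v ∈ S, (X : (ZMod p)[X]) ^ (g2 v))) := by
            rw [Polynomial.C_1]; exact pow_dvd_pow _ hmul
        _ ∣ _ := Polynomial.pow_rootMultiplicity_dvd _ 1
    rcases hor with h | h
    · exact key (fun v => v.val) h
    · have h2 := key (fun v => (-v).val) h
      have hiff : ∀ v ∈ S, ((-v).val % p = 0) ↔ (v.val % p = 0) := by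
        intro v _
        by_cases hv : v = 0
        · subst hv; simp
        · rw [ZMod.neg_val, if_neg hv]
          have hlt : v.val < p^2 := ZMod.val_lt v
          have hpd : p ∣ p^2 := dvd_pow_self p (by norm_num)
          rw [← Nat.dvd_iff_mod_eq_zero, ← Nat.dvd_iff_mod_eq_zero]
          constructor
          · intro hd
            have h3 := Nat.dvd_sub hpd hd
            rwa [Nat.sub_sub_self hlt.le] at h3
          · intro hd
            exact Nat.dvd_sub hpd hd
      have heq : (S.filter fun v => (-v).val % p = 0)
          = (S.filter fun v => v.val % p = 0) := Finset.filter_congr hiff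
      have hcards := congrArg Finset.card heq
      rwa [hcards] at h2
  have hc1 : 0 < (S.filter fun v => v.val % p = 0).card := by
    apply Finset.card_pos.mpr
    exact ⟨0, Finset.mem_filter.mpr ⟨hS0, by simp⟩⟩
  have hcle : (S.filter fun v => v.val % p = 0).card ≤ p :=
    le_trans (Finset.card_filter_le S _) (le_of_eq hS_p)
  have hceq : (S.filter fun v => v.val % p = 0).card = p :=
    Nat.le_antisymm hcle (Nat.le_of_dvd hc1 hdivcard)
  have hall : ∀ v ∈ S, p ∣ v.val := by
    have hfeq : (S.filter fun v => v.val % p = 0) = S :=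
      Finset.eq_of_subset_of_card_le (Finset.filter_subset _ _)
        (by rw [hceq, hS_p])
    intro v hv
    rw [← hfeq] at hv
    exact Nat.dvd_of_mod_eq_zero (Finset.mem_filter.mp hv).2
  have hpd : p ∣ p^2 := dvd_pow_self p (by norm_num)
  set f : ZMod (p^2) →+* ZMod p := ZMod.castHom hpd (ZMod p) with hfdef
  set H : AddSubgroup (ZMod (p^2)) := AddMonoidHom.ker f.toAddMonoidHom with hHdef
  have hSsub : (↑S : Set (ZMod (p^2))) ⊆ H := by
    intro x hx
    have hxS : x ∈ S := hx
    have : f x = 0 := by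
      rw [hfdef, ZMod.castHom_apply, ← ZMod.natCast_val]
      exact (ZMod.natCast_eq_zero_iff _ _).mpr (hall x hxS)
    exact AddMonoidHom.mem_ker.mpr this
  have hHtop := hSprim H hSsub
  have h1H : (1 : ZMod (p^2)) ∈ H := by
    rw [hHtop]; exact AddSubgroup.mem_top 1
  have hf1z : f 1 = 0 := AddMonoidHom.mem_ker.mp h1H
  rw [map_one] at hf1z
  exact one_ne_zero hf1z
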